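/- For the 4×4-type moon polyomino M with rows (top to bottom) of x-supports [1,2], [1,2], [1,3], [1,3] shown in Figure 7 of the paper, with row sums r = (1,1,1,1) and column sums c = (2,1,1), the joint distribution of (ne, se) over F(M,r,c) is not symmetric: the number of fillings with (ne,se) = (1,3) is 1 while the number with (ne,se) = (3,1) is 0. -/

import Mathlib

open Set
open scoped Classical

def Row (P : Set (ℤ × ℤ)) (y : ℤ) : Set ℤ := {x | (x, y) ∈ P}

def Col (P : Set (ℤ × ℤ)) (x : ℤ) : Set ℤ := {y | (x, y) ∈ P}

def RowConvex (P : Set (ℤ × ℤ)) : Prop :=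
  ∀ y x₁ x₂ x, x₁ ∈ Row P y → x₂ ∈ Row P y → x₁ ≤ x → x ≤ x₂ → x ∈ Row P y

def ColConvex (P : Set (ℤ × ℤ)) : Prop :=
  ∀ x y₁ y₂ y, y₁ ∈ Col P x → y₂ ∈ Col P x → y₁ ≤ y → y ≤ y₂ → y ∈ Col P x

def RowsComparable (P : Set (ℤ × ℤ)) : Prop :=
  ∀ y₁ y₂, Row P y₁ ⊆ Row P y₂ ∨ Row P y₂ ⊆ Row P y₁

def ColsComparable (P : Set (ℤ × ℤ)) : Prop :=
  ∀ x₁ x₂, Col P x₁ ⊆ Col P x₂ ∨ Col P x₂ ⊆ Col P x₁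

/-- The length of the row of `P` at height `y` (also: the row sum of a filling). -/
noncomputable def rowLen (P : Set (ℤ × ℤ)) (y : ℤ) : ℕ := (Row P y).ncard

/-- The length of the column of `P` at abscissa `x` (also: the column sum of a filling). -/
noncomputable def colLen (P : Set (ℤ × ℤ)) (x : ℤ) : ℕ := (Col P x).ncard

/-- A row is exceptional if some row strictly above it and some row strictly below it
are strictly longer. -/
def ExceptionalRow (P : Set (ℤ × ℤ)) (y : ℤ) : Prop :=
  (∃ y' > y, rowLen P y < rowLen P y') ∧ (∃ y' < y, rowLen P y < rowLen P y')

/-- A moon polyomino: finite, row- and column-convex, intersection-free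
(any two columns comparable). -/
def MoonPolyomino (P : Set (ℤ × ℤ)) : Prop :=
  P.Finite ∧ RowConvex P ∧ ColConvex P ∧ ColsComparable P

/-- An almost-moon polyomino: finite, rows are intervals, pairwise comparable rows,
and at most one exceptional row. -/
def AlmostMoon (P : Set (ℤ × ℤ)) : Prop :=
  P.Finite ∧ RowConvex P ∧ RowsComparable P ∧
    ∀ y₁ y₂, ExceptionalRow P y₁ → ExceptionalRow P y₂ → y₁ = y₂

/-- `g` is a northeast chain of size `k` of the filling `F` in the polyomino `P`. -/
def IsNEChain (P F : Set (ℤ × ℤ)) (k : ℕ) (g : Fin k → ℤ × ℤ) : Prop :=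
  (∀ r, g r ∈ F) ∧ StrictMono (fun r => (g r).1) ∧ StrictMono (fun r => (g r).2) ∧
    ∀ r s, ((g r).1, (g s).2) ∈ P

/-- The size of the largest northeast chain of the filling `F` in the polyomino `P`. -/
noncomputable def neSize (P F : Set (ℤ × ℤ)) : ℕ :=
  sSup {k | ∃ g : Fin k → ℤ × ℤ, IsNEChain P F k g}

/-- Interchange the rows at heights `y₁` and `y₂`. -/
def rswap (y₁ y₂ : ℤ) (c : ℤ × ℤ) : ℤ × ℤ :=
  (c.1, if c.2 = y₁ then y₂ else if c.2 = y₂ then y₁ else c.2)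

/-- The row-swap map on fillings: cells in columns of `S` (the support of the short row)
stay put, while the overhang cells of the long row are moved between heights `y₁`, `y₂`. -/
noncomputable def fswap (S : Set ℤ) (y₁ y₂ : ℤ) (F : Set (ℤ × ℤ)) : Set (ℤ × ℤ) :=
  (fun c => if c.1 ∈ S then c else rswap y₁ y₂ c) '' F

/-- `g` is a southeast chain of size `k` of the filling `F` in the polyomino `P`. -/
def IsSEChain (P F : Set (ℤ × ℤ)) (k : ℕ) (g : Fin k → ℤ × ℤ) : Prop :=
  (∀ r, g r ∈ F) ∧ StrictMono (fun r => (g r).1) ∧ StrictAnti (fun r => (g r).2) ∧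
    ∀ r s, ((g r).1, (g s).2) ∈ P

/-- The size of the largest southeast chain of the filling `F` in the polyomino `P`. -/
noncomputable def seSize (P F : Set (ℤ × ℤ)) : ℕ :=
  sSup {k | ∃ g : Fin k → ℤ × ℤ, IsSEChain P F k g}

/-- The moon polyomino of Figure 7: columns 1, 2 of length 4, column 3 of length 3. -/
def MFig7 : Set (ℤ × ℤ) :=
  {p | (1 ≤ p.1 ∧ p.1 ≤ 2 ∧ 1 ≤ p.2 ∧ p.2 ≤ 4) ∨ (p.1 = 3 ∧ 1 ≤ p.2 ∧ p.2 ≤ 3)}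

/-! ### Auxiliary material for `fig7_not_symmetric` -/

/-- The unique filling with `(ne, se) = (1, 3)`. -/
def F0 : Set (ℤ × ℤ) := {(1,4),(1,3),(2,2),(3,1)}

lemma mem_F0 (p : ℤ × ℤ) :
    p ∈ F0 ↔ p = (1,4) ∨ p = (1,3) ∨ p = (2,2) ∨ p = (3,1) := by
  simp [F0]

lemma F0_sub : F0 ⊆ MFig7 := by
  intro p hp
  rcases (mem_F0 p).mp hp with h|h|h|h <;> subst h <;> simp [MFig7]

lemma memM_bounds {p : ℤ × ℤ} (h : p ∈ MFig7) :
    1 ≤ p.1 ∧ p.1 ≤ 3 ∧ 1 ≤ p.2 ∧ p.2 ≤ 4 ∧ (p.1 = 3 → p.2 ≤ 3) := by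
  simp only [MFig7, Set.mem_setOf_eq] at h
  omega

lemma chain_bound {k : ℕ} (f : Fin k → ℤ) (hm : StrictMono f)
    (hb : ∀ r, 1 ≤ f r ∧ f r ≤ 3) : k ≤ 3 := by
  by_contra h
  push_neg at h
  have h01 : f ⟨0, by omega⟩ < f ⟨1, by omega⟩ := hm (by simp [Fin.lt_def])
  have h12 : f ⟨1, by omega⟩ < f ⟨2, by omega⟩ := hm (by simp [Fin.lt_def])
  have h23 : f ⟨2, by omega⟩ < f ⟨3, by omega⟩ := hm (by simp [Fin.lt_def])
  have hb0 := (hb ⟨0, by omega⟩).1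
  have hb3 := (hb ⟨3, by omega⟩).2
  omega

lemma ne_zero_mem (P F : Set (ℤ × ℤ)) :
    0 ∈ {k | ∃ g : Fin k → ℤ × ℤ, IsNEChain P F k g} := by
  refine ⟨fun r => r.elim0, fun r => r.elim0, ?_, ?_, fun r s => r.elim0⟩ <;>
    · intro i j _; exact i.elim0

lemma se_zero_mem (P F : Set (ℤ × ℤ)) :
    0 ∈ {k | ∃ g : Fin k → ℤ × ℤ, IsSEChain P F k g} := by
  refine ⟨fun r => r.elim0, fun r => r.elim0, ?_, ?_, fun r s => r.elim0⟩ <;>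
    · intro i j _; exact i.elim0

lemma ne_bdd {F : Set (ℤ × ℤ)} (hF : F ⊆ MFig7) :
    ∀ k ∈ {k | ∃ g : Fin k → ℤ × ℤ, IsNEChain MFig7 F k g}, k ≤ 3 := by
  rintro k ⟨g, hgF, hgx, -, -⟩
  exact chain_bound _ hgx fun r =>
    ⟨(memM_bounds (hF (hgF r))).1, (memM_bounds (hF (hgF r))).2.1⟩

lemma se_bdd {F : Set (ℤ × ℤ)} (hF : F ⊆ MFig7) :
    ∀ k ∈ {k | ∃ g : Fin k → ℤ × ℤ, IsSEChain MFig7 F k g}, k ≤ 3 := by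
  rintro k ⟨g, hgF, hgx, -, -⟩
  exact chain_bound _ hgx fun r =>
    ⟨(memM_bounds (hF (hgF r))).1, (memM_bounds (hF (hgF r))).2.1⟩

lemma sm2 {f : Fin 2 → ℤ} (h : f 0 < f 1) : StrictMono f := by
  intro i j hij
  fin_cases i <;> fin_cases j <;> first | exact absurd hij (by decide) | exact h

lemma sa2 {f : Fin 2 → ℤ} (h : f 1 < f 0) : StrictAnti f := by
  intro i j hij
  fin_cases i <;> fin_cases j <;> first | exact absurd hij (by decide) | exact h

lemma sm3 {f : Fin 3 → ℤ} (h01 : f 0 < f 1) (h12 : f 1 < f 2) : StrictMono f := by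
  intro i j hij
  fin_cases i <;> fin_cases j <;>
    first | exact absurd hij (by decide) | exact h01 | exact h12 | exact h01.trans h12

lemma sa3 {f : Fin 3 → ℤ} (h01 : f 1 < f 0) (h12 : f 2 < f 1) : StrictAnti f := by
  intro i j hij
  fin_cases i <;> fin_cases j <;>
    first | exact absurd hij (by decide) | exact h01 | exact h12 | exact h12.trans h01

/-- All the properties of `F0` needed for the theorem. -/
lemma rowLen_F0 : ∀ y : ℤ, 1 ≤ y → y ≤ 4 → rowLen F0 y = 1 := by
  intro y h1 h4
  interval_cases y
  · have : Row F0 1 = {3} := by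
      ext x; simp [Row, F0, Prod.ext_iff]
    rw [rowLen, this, Set.ncard_singleton]
  · have : Row F0 2 = {2} := by
      ext x; simp [Row, F0, Prod.ext_iff]
    rw [rowLen, this, Set.ncard_singleton]
  · have : Row F0 3 = {1} := by
      ext x; simp [Row, F0, Prod.ext_iff]
    rw [rowLen, this, Set.ncard_singleton]
  · have : Row F0 4 = {1} := by
      ext x; simp [Row, F0, Prod.ext_iff]
    rw [rowLen, this, Set.ncard_singleton]

lemma colLen_F0 : colLen F0 1 = 2 ∧ colLen F0 2 = 1 ∧ colLen F0 3 = 1 := by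
  refine ⟨?_, ?_, ?_⟩
  · have : Col F0 1 = {4, 3} := by
      ext y; simp [Col, F0, Prod.ext_iff]
    rw [colLen, this, Set.ncard_pair (by norm_num)]
  · have : Col F0 2 = {2} := by
      ext y; simp [Col, F0, Prod.ext_iff]
    rw [colLen, this, Set.ncard_singleton]
  · have : Col F0 3 = {1} := by
      ext y; simp [Col, F0, Prod.ext_iff]
    rw [colLen, this, Set.ncard_singleton]

lemma neSize_F0 : neSize MFig7 F0 = 1 := by
  apply le_antisymm
  · apply csSup_le ⟨0, ne_zero_mem _ _⟩
    rintro k ⟨g, hgF, hgx, hgy, -⟩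
    by_contra h
    push_neg at h
    have h2 : 2 ≤ k := h
    have hlt : (⟨0, by omega⟩ : Fin k) < ⟨1, by omega⟩ := by simp [Fin.lt_def]
    have hx := hgx hlt
    have hy := hgy hlt
    have h0 := (mem_F0 _).mp (hgF ⟨0, by omega⟩)
    have h1 := (mem_F0 _).mp (hgF ⟨1, by omega⟩)
    rcases h0 with h|h|h|h <;> rcases h1 with h'|h'|h'|h' <;>
      simp only [h, h'] at hx hy <;> omega
  · apply le_csSup ⟨3, ne_bdd F0_sub⟩
    refine ⟨fun _ => (1, 4), fun r => by simp [F0], ?_, ?_, fun r s => by simp [MFig7]⟩ <;>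
      · intro i j hij
        have hi := i.2; have hj := j.2
        have := Fin.lt_def.mp hij
        omega

lemma seSize_F0 : seSize MFig7 F0 = 3 := by
  apply le_antisymm
  · exact csSup_le ⟨0, se_zero_mem _ _⟩ (se_bdd F0_sub)
  · apply le_csSup ⟨3, se_bdd F0_sub⟩
    refine ⟨![(1,3),(2,2),(3,1)], ?_, ?_, ?_, ?_⟩
    · intro r; fin_cases r <;> simp [F0]
    · exact sm3 (by norm_num) (by decide)
    · exact sa3 (by norm_num) (by decide)
    · intro r s; fin_cases r <;> fin_cases s <;> simp [MFig7]

/-- Any filling satisfying the constraints with `se = 3` equals `F0`. -/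
lemma unique_of_se3 {F : Set (ℤ × ℤ)} (hsub : F ⊆ MFig7)
    (hrow : ∀ y, 1 ≤ y → y ≤ 4 → rowLen F y = 1)
    (hc1 : colLen F 1 = 2) (hc2 : colLen F 2 = 1) (hc3 : colLen F 3 = 1)
    (hse : seSize MFig7 F = 3) : F = F0 := by
  -- extract a southeast chain of size 3
  have hmem : (3 : ℕ) ∈ {k | ∃ g : Fin k → ℤ × ℤ, IsSEChain MFig7 F k g} := by
    have := Nat.sSup_mem (⟨0, se_zero_mem MFig7 F⟩ :
      Set.Nonempty {k | ∃ g : Fin k → ℤ × ℤ, IsSEChain MFig7 F k g}) ⟨3, se_bdd hsub⟩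
    rwa [show sSup {k | ∃ g : Fin k → ℤ × ℤ, IsSEChain MFig7 F k g} = seSize MFig7 F
      from rfl, hse] at this
  obtain ⟨g, hgF, hgx, hgy, hgP⟩ := hmem
  have b0 := memM_bounds (hsub (hgF 0))
  have b1 := memM_bounds (hsub (hgF 1))
  have b2 := memM_bounds (hsub (hgF 2))
  have hx01 : (g 0).1 < (g 1).1 := hgx (by decide)
  have hx12 : (g 1).1 < (g 2).1 := hgx (by decide)
  have hy01 : (g 1).2 < (g 0).2 := hgy (by decide)
  have hy12 : (g 2).2 < (g 1).2 := hgy (by decide)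
  have bg : ((g 2).1, (g 0).2) ∈ MFig7 := hgP 2 0
  have bg' := memM_bounds bg
  -- pin down the chain
  have hg0 : g 0 = (1, 3) :=
    Prod.ext_iff.mpr ⟨(by omega : (g 0).1 = 1), (by omega : (g 0).2 = 3)⟩
  have hg1 : g 1 = (2, 2) :=
    Prod.ext_iff.mpr ⟨(by omega : (g 1).1 = 2), (by omega : (g 1).2 = 2)⟩
  have hg2 : g 2 = (3, 1) :=
    Prod.ext_iff.mpr ⟨(by omega : (g 2).1 = 3), (by omega : (g 2).2 = 1)⟩
  have h13 : ((1:ℤ), (3:ℤ)) ∈ F := hg0 ▸ hgF 0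
  have h22 : ((2:ℤ), (2:ℤ)) ∈ F := hg1 ▸ hgF 1
  have h31 : ((3:ℤ), (1:ℤ)) ∈ F := hg2 ▸ hgF 2
  -- rows are singletons
  obtain ⟨r1, hr1⟩ := Set.ncard_eq_one.mp (hrow 1 (by norm_num) (by norm_num))
  obtain ⟨r2, hr2⟩ := Set.ncard_eq_one.mp (hrow 2 (by norm_num) (by norm_num))
  obtain ⟨r3, hr3⟩ := Set.ncard_eq_one.mp (hrow 3 (by norm_num) (by norm_num))
  have hr1' : r1 = 3 := by
    have : (3:ℤ) ∈ Row F 1 := h31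
    rw [hr1] at this; exact this.symm
  have hr2' : r2 = 2 := by
    have : (2:ℤ) ∈ Row F 2 := h22
    rw [hr2] at this; exact this.symm
  have hr3' : r3 = 1 := by
    have : (1:ℤ) ∈ Row F 3 := h13
    rw [hr3] at this; exact this.symm
  -- columns 2 and 3
  obtain ⟨c2, hcc2⟩ := Set.ncard_eq_one.mp hc2
  have hc2' : Col F 2 = {2} := by
    have : (2:ℤ) ∈ Col F 2 := h22
    rw [hcc2] at this ⊢; rw [this]
  obtain ⟨c3, hcc3⟩ := Set.ncard_eq_one.mp hc3
  have hc3' : Col F 3 = {1} := by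
    have : (1:ℤ) ∈ Col F 3 := h31
    rw [hcc3] at this ⊢; rw [this]
  -- column 1
  obtain ⟨a, b, hab, habs⟩ := Set.ncard_eq_two.mp hc1
  have h3m : (3:ℤ) ∈ Col F 1 := h13
  have hc1' : Col F 1 = {3, 4} := by
    have hother : ∀ t : ℤ, t ∈ Col F 1 → t ≠ 3 → t = 4 := by
      intro t ht hne
      have htF : ((1:ℤ), t) ∈ F := ht
      have hbnd : 1 ≤ t ∧ t ≤ 4 :=
        ⟨(memM_bounds (hsub htF)).2.2.1, (memM_bounds (hsub htF)).2.2.2.1⟩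
      have ht1 : t ≠ 1 := by
        intro h
        subst h
        have h1r : (1:ℤ) ∈ Row F 1 := htF
        rw [hr1] at h1r
        simp at h1r
        omega
      have ht2 : t ≠ 2 := by
        intro h
        subst h
        have h1r : (1:ℤ) ∈ Row F 2 := htF
        rw [hr2] at h1r
        simp at h1r
        omega
      omega
    rw [habs] at h3m ⊢
    simp only [Set.mem_insert_iff, Set.mem_singleton_iff] at h3m
    rcases h3m with h | h
    · have hb4 : b = 4 := hother b (by rw [habs]; simp) (by omega)
      rw [h, hb4]
    · have ha4 : a = 4 := hother a (by rw [habs]; simp) (by omega)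
      rw [h, ha4, Set.pair_comm]
  -- conclude
  ext ⟨x, y⟩
  constructor
  · intro hxy
    have hb := memM_bounds (hsub hxy)
    have hx1 : 1 ≤ x := hb.1
    have hx3 : x ≤ 3 := hb.2.1
    interval_cases x
    · have : y ∈ Col F 1 := hxy
      rw [hc1'] at this
      simp only [Set.mem_insert_iff, Set.mem_singleton_iff] at this
      rcases this with h | h <;> subst h <;> simp [F0]
    · have : y ∈ Col F 2 := hxy
      rw [hc2'] at this
      simp at this; subst this; simp [F0]
    · have : y ∈ Col F 3 := hxy
      rw [hc3'] at this
      simp at this; subst this; simp [F0]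
  · intro hxy
    rcases (mem_F0 _).mp hxy with h|h|h|h <;> rw [h]
    · have : (4:ℤ) ∈ Col F 1 := by rw [hc1']; simp
      exact this
    · exact h13
    · exact h22
    · exact h31

lemma no_ne3_se1 {F : Set (ℤ × ℤ)} (hsub : F ⊆ MFig7)
    (hrow : ∀ y, 1 ≤ y → y ≤ 4 → rowLen F y = 1)
    (hc1 : colLen F 1 = 2)
    (hne : neSize MFig7 F = 3) (hse : seSize MFig7 F = 1) : False := by
  -- extract a northeast chain of size 3
  have hmem : (3 : ℕ) ∈ {k | ∃ g : Fin k → ℤ × ℤ, IsNEChain MFig7 F k g} := by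
    have := Nat.sSup_mem (⟨0, ne_zero_mem MFig7 F⟩ :
      Set.Nonempty {k | ∃ g : Fin k → ℤ × ℤ, IsNEChain MFig7 F k g}) ⟨3, ne_bdd hsub⟩
    rwa [show sSup {k | ∃ g : Fin k → ℤ × ℤ, IsNEChain MFig7 F k g} = neSize MFig7 F
      from rfl, hne] at this
  obtain ⟨g, hgF, hgx, hgy, hgP⟩ := hmem
  have b0 := memM_bounds (hsub (hgF 0))
  have b1 := memM_bounds (hsub (hgF 1))
  have b2 := memM_bounds (hsub (hgF 2))
  have hx01 : (g 0).1 < (g 1).1 := hgx (by decide)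
  have hx12 : (g 1).1 < (g 2).1 := hgx (by decide)
  have hy01 : (g 0).2 < (g 1).2 := hgy (by decide)
  have hy12 : (g 1).2 < (g 2).2 := hgy (by decide)
  have hg0 : g 0 = (1, 1) :=
    Prod.ext_iff.mpr ⟨(by omega : (g 0).1 = 1), (by omega : (g 0).2 = 1)⟩
  have hg1 : g 1 = (2, 2) :=
    Prod.ext_iff.mpr ⟨(by omega : (g 1).1 = 2), (by omega : (g 1).2 = 2)⟩
  have hg2 : g 2 = (3, 3) :=
    Prod.ext_iff.mpr ⟨(by omega : (g 2).1 = 3), (by omega : (g 2).2 = 3)⟩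
  have h11 : ((1:ℤ), (1:ℤ)) ∈ F := hg0 ▸ hgF 0
  have h22 : ((2:ℤ), (2:ℤ)) ∈ F := hg1 ▸ hgF 1
  have h33 : ((3:ℤ), (3:ℤ)) ∈ F := hg2 ▸ hgF 2
  -- find the second cell of column 1, in row 3 or 4
  obtain ⟨r1, hr1⟩ := Set.ncard_eq_one.mp (hrow 1 (by norm_num) (by norm_num))
  obtain ⟨r2, hr2⟩ := Set.ncard_eq_one.mp (hrow 2 (by norm_num) (by norm_num))
  obtain ⟨a, b, hab, habs⟩ := Set.ncard_eq_two.mp hc1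
  have h1m : (1:ℤ) ∈ Col F 1 := h11
  have hex : ∃ t : ℤ, t ∈ Col F 1 ∧ 3 ≤ t ∧ t ≤ 4 := by
    have hother : ∀ t : ℤ, t ∈ Col F 1 → t ≠ 1 → 3 ≤ t ∧ t ≤ 4 := by
      intro t ht hne1
      have htF : ((1:ℤ), t) ∈ F := ht
      have hbnd : 1 ≤ t ∧ t ≤ 4 :=
        ⟨(memM_bounds (hsub htF)).2.2.1, (memM_bounds (hsub htF)).2.2.2.1⟩
      have ht2 : t ≠ 2 := by
        intro h
        subst h
        have h1r : (1:ℤ) ∈ Row F 2 := htF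
        have h2r : (2:ℤ) ∈ Row F 2 := h22
        rw [hr2] at h1r h2r
        simp at h1r h2r
        omega
      omega
    rw [habs] at h1m
    simp only [Set.mem_insert_iff, Set.mem_singleton_iff] at h1m
    rcases h1m with h | h
    · exact ⟨b, by rw [habs]; simp, hother b (by rw [habs]; simp) (by omega)⟩
    · exact ⟨a, by rw [habs]; simp, hother a (by rw [habs]; simp) (by omega)⟩
  obtain ⟨t, htc, ht3, ht4⟩ := hex
  have htF : ((1:ℤ), t) ∈ F := htc
  -- southeast chain of size 2: (1,t), (2,2)
  have h2se : (2 : ℕ) ∈ {k | ∃ g : Fin k → ℤ × ℤ, IsSEChain MFig7 F k g} := by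
    refine ⟨![(1, t), (2, 2)], ?_, ?_, ?_, ?_⟩
    · intro r; fin_cases r <;> simpa using ‹_›
    · apply sm2; norm_num
    · apply sa2; show (2:ℤ) < t; omega
    · intro r s
      fin_cases r <;> fin_cases s <;> simp [MFig7] <;> omega
  have : (2 : ℕ) ≤ seSize MFig7 F := le_csSup ⟨3, se_bdd hsub⟩ h2se
  omega

/-- For the moon polyomino of Figure 7 with row sums `(1,1,1,1)` and column sums
`(2,1,1)`, the joint distribution of `(ne, se)` is not symmetric: exactly one filling has
`(ne, se) = (1, 3)` but no filling has `(ne, se) = (3, 1)`. -/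
theorem fig7_not_symmetric :
    {F : Set (ℤ × ℤ) | F ⊆ MFig7 ∧ (∀ y, 1 ≤ y → y ≤ 4 → rowLen F y = 1) ∧
      colLen F 1 = 2 ∧ colLen F 2 = 1 ∧ colLen F 3 = 1 ∧
      neSize MFig7 F = 1 ∧ seSize MFig7 F = 3}.ncard = 1 ∧
    {F : Set (ℤ × ℤ) | F ⊆ MFig7 ∧ (∀ y, 1 ≤ y → y ≤ 4 → rowLen F y = 1) ∧
      colLen F 1 = 2 ∧ colLen F 2 = 1 ∧ colLen F 3 = 1 ∧
      neSize MFig7 F = 3 ∧ seSize MFig7 F = 1}.ncard = 0 := by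
  constructor
  · have hset : {F : Set (ℤ × ℤ) | F ⊆ MFig7 ∧ (∀ y, 1 ≤ y → y ≤ 4 → rowLen F y = 1) ∧
        colLen F 1 = 2 ∧ colLen F 2 = 1 ∧ colLen F 3 = 1 ∧
        neSize MFig7 F = 1 ∧ seSize MFig7 F = 3} = {F0} := by
      ext F
      simp only [Set.mem_setOf_eq, Set.mem_singleton_iff]
      constructor
      · rintro ⟨hsub, hrow, hc1, hc2, hc3, -, hse⟩
        exact unique_of_se3 hsub hrow hc1 hc2 hc3 hse
      · rintro rfl
        exact ⟨F0_sub, rowLen_F0, colLen_F0.1, colLen_F0.2.1, colLen_F0.2.2,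
          neSize_F0, seSize_F0⟩
    rw [hset]
    exact Set.ncard_singleton F0
  · have hset : {F : Set (ℤ × ℤ) | F ⊆ MFig7 ∧ (∀ y, 1 ≤ y → y ≤ 4 → rowLen F y = 1) ∧
        colLen F 1 = 2 ∧ colLen F 2 = 1 ∧ colLen F 3 = 1 ∧
        neSize MFig7 F = 3 ∧ seSize MFig7 F = 1} = ∅ := by
      ext F
      simp only [Set.mem_setOf_eq, Set.mem_empty_iff_false, iff_false, not_and]
      rintro hsub hrow hc1 hc2 hc3 hne
      intro hse
      exact no_ne3_se1 hsub hrow hc1 hne hse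
    rw [hset]
    exact Set.ncard_empty _
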